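/- Let N ≥ 1 and let a_{abc} (a, b, c ∈ Fin N) be real numbers that are fully symmetric under all permutations of (a, b, c) and satisfy the associativity condition Σ_d a_{dab} a_{dcf} = Σ_d a_{dac} a_{dbf} for all a, b, c, f (associativity of the product (x·y)^a = Σ_{b,c} a_{abc} x^b y^c on ℝᴺ with the standard inner product). Then there exists an orthogonal matrix R ∈ O(N) such that the transformed structure constants ã_{abc} = Σ_{a',b',c'} R_{a a'} R_{b b'} R_{c c'} a_{a'b'c'} vanish whenever two of the indices a, b, c are different. -/

import Mathlib

open Finset in
private lemma sum3_swap13 {N : ℕ} (G : Fin N → Fin N → Fin N → ℝ) :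
    ∑ x, ∑ y, ∑ z, G x y z = ∑ x, ∑ y, ∑ z, G z y x := by
  calc ∑ x, ∑ y, ∑ z, G x y z
      = ∑ y, ∑ x, ∑ z, G x y z := Finset.sum_comm
    _ = ∑ y, ∑ z, ∑ x, G x y z := Finset.sum_congr rfl fun y _ => Finset.sum_comm
    _ = ∑ x, ∑ y, ∑ z, G z y x := Finset.sum_comm

/-- Fully symmetric real structure constants `a_{abc}` on `ℝᴺ`
satisfying the associativity condition `Σ_d a_{dab} a_{dcf} = Σ_d a_{dac} a_{dbf}`
can be brought, by an orthogonal transformation `R ∈ O(N)`, to a form in which the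
transformed structure constants vanish whenever two of the three indices differ:
there are no cross-interactions between distinct gravitons. -/
theorem structure_constants_diagonalizable_by_orthogonal_transformation
    (N : ℕ) (hN : 1 ≤ N)
    (a : Fin N → Fin N → Fin N → ℝ)
    (hsymm : ∀ (σ : Equiv.Perm (Fin 3)) (g : Fin 3 → Fin N),
      a (g 0) (g 1) (g 2) = a (g (σ 0)) (g (σ 1)) (g (σ 2)))
    (hassoc : ∀ i j k l : Fin N,
      ∑ d, a d i j * a d k l = ∑ d, a d i k * a d j l) :
    ∃ R : Matrix (Fin N) (Fin N) ℝ, R ∈ Matrix.orthogonalGroup (Fin N) ℝ ∧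
      ∀ i j k : Fin N, ¬ (i = j ∧ j = k) →
        (∑ i', ∑ j', ∑ k', R i i' * R j j' * R k k' * a i' j' k') = 0 := by
  classical
  -- symmetry of a
  have hs12 : ∀ i j k, a i j k = a j i k := by
    intro i j k
    have h := hsymm (Equiv.swap 0 1) ![i, j, k]
    simpa [Equiv.swap_apply_def, Fin.ext_iff] using h
  have hs23 : ∀ i j k, a i j k = a i k j := by
    intro i j k
    have h := hsymm (Equiv.swap 1 2) ![i, j, k]
    simpa [Equiv.swap_apply_def, Fin.ext_iff] using h
  have hs13 : ∀ i j k, a i j k = a k j i := by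
    intro i j k
    have h := hsymm (Equiv.swap 0 2) ![i, j, k]
    simpa [Equiv.swap_apply_def, Fin.ext_iff] using h

  -- the multiplication operators
  set M : Fin N → Matrix (Fin N) (Fin N) ℝ := fun d => Matrix.of fun j k => a d j k with hM
  set T : Fin N → Module.End ℝ (EuclideanSpace ℝ (Fin N)) :=
    fun d => Matrix.toEuclideanLin (M d) with hT_def
  have hTsymm : ∀ d, (T d).IsSymmetric := by
    intro d
    rw [hT_def]
    refine Matrix.isHermitian_iff_isSymmetric.mp ?_
    refine Matrix.IsHermitian.ext_iff.mpr fun i j => ?_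
    simp [hM, hs23 d j i]
  have hMcomm : ∀ c d, M c * M d = M d * M c := by
    intro c d
    ext p q
    simp only [Matrix.mul_apply, hM, Matrix.of_apply]
    have h := hassoc p c d q
    calc ∑ x, a c p x * a d x q
        = ∑ x, a x p c * a x d q := by
          refine Finset.sum_congr rfl fun x _ => ?_
          rw [← hs13 x p c, hs12 x d q]
      _ = ∑ x, a x p d * a x c q := h
      _ = ∑ x, a d p x * a c x q := by
          refine Finset.sum_congr rfl fun x _ => ?_
          rw [← hs13 x p d, hs12 x c q]
  have hTcomm : ∀ c d, Commute (T c) (T d) := by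
    intro c d
    have key : ∀ A B : Matrix (Fin N) (Fin N) ℝ,
        Matrix.toEuclideanLin (A * B)
          = Matrix.toEuclideanLin A * Matrix.toEuclideanLin B := by
      intro A B
      rw [Matrix.toEuclideanLin_eq_toLin_orthonormal, Matrix.toLin_mul _
        ((EuclideanSpace.basisFun (Fin N) ℝ).toBasis), Module.End.mul_eq_comp]
    show T c * T d = T d * T c
    rw [hT_def, ← key, ← key, hMcomm]
  have hC : Pairwise (Function.onFun Commute T) := fun c d _ => hTcomm c d
  have hInt : DirectSum.IsInternal
      (fun χ : Fin N → ℝ => ⨅ j, Module.End.eigenspace (T j) (χ j)) :=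
    LinearMap.IsSymmetric.LinearMap.IsSymmetric.directSum_isInternal_of_pairwise_commute
      hTsymm hC
  have hOrth := LinearMap.IsSymmetric.orthogonalFamily_iInf_eigenspaces hTsymm
  have hn : Module.finrank ℝ (EuclideanSpace ℝ (Fin N)) = N := by
    simp [finrank_euclideanSpace]
  set V : (Fin N → ℝ) → Submodule ℝ (EuclideanSpace ℝ (Fin N)) :=
    fun χ => ⨅ j, Module.End.eigenspace (T j) (χ j) with hV
  haveI : Fintype {χ : Fin N → ℝ // V χ ≠ ⊥} :=
    (hInt.submodule_iSupIndep).fintypeNeBotOfFiniteDimensional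
  have hInt' : DirectSum.IsInternal (fun i : {χ : Fin N → ℝ // V χ ≠ ⊥} => V i) :=
    DirectSum.isInternal_ne_bot_iff.mpr hInt
  have hOrth' : OrthogonalFamily ℝ (fun i : {χ : Fin N → ℝ // V χ ≠ ⊥} => (V i : Submodule ℝ _))
      (fun i => (V (i : Fin N → ℝ)).subtypeₗᵢ) := fun i j hij =>
    hOrth (fun h => hij (Subtype.ext h))
  set b : OrthonormalBasis (Fin N) ℝ (EuclideanSpace ℝ (Fin N)) :=
    hInt'.subordinateOrthonormalBasis hn hOrth' with hb
  set χ : Fin N → (Fin N → ℝ) :=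
    fun p => (hInt'.subordinateOrthonormalBasisIndex hn p hOrth').1 with hχ
  have heig : ∀ p d, T d (b p) = χ p d • b p := by
    intro p d
    have h1 := hInt'.subordinateOrthonormalBasis_subordinate hn p hOrth'
    have h2 : b p ∈ Module.End.eigenspace (T d) (χ p d) :=
      (Submodule.mem_iInf _).mp h1 d
    exact Module.End.mem_eigenspace_iff.mp h2
  have heigc : ∀ p d j', (∑ k', a d j' k' * b p k') = χ p d * b p j' := by
    intro p d j'
    have h3 : (T d) (b p) j' = (χ p d • b p) j' := by rw [heig p d]
    rw [hT_def] at h3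
    simpa [Matrix.toEuclideanLin_apply, Matrix.mulVec, dotProduct, hM,
      PiLp.smul_apply, smul_eq_mul] using h3
  set R : Matrix (Fin N) (Fin N) ℝ := Matrix.of fun i i' => b i i' with hR
  have hortho : ∀ p q : Fin N, (∑ x, b p x * b q x) = if p = q then 1 else 0 := by
    intro p q
    have h := orthonormal_iff_ite.mp b.orthonormal p q
    rw [PiLp.inner_apply] at h
    simpa [mul_comm] using h
  refine ⟨R, ?_, ?_⟩
  · rw [Matrix.mem_orthogonalGroup_iff]
    ext p q
    simp only [Matrix.mul_apply, Matrix.star_apply, star_trivial, Matrix.one_apply, hR,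
      Matrix.of_apply]
    exact hortho p q
  · have key : ∀ i j k : Fin N, j ≠ k →
        (∑ i', ∑ j', ∑ k', R i i' * R j j' * R k k' * a i' j' k') = 0 := by
      intro i j k hjk
      have horth0 : (∑ x, b j x * b k x) = 0 := by simpa [hjk] using hortho j k
      calc ∑ i', ∑ j', ∑ k', R i i' * R j j' * R k k' * a i' j' k'
          = ∑ i', ∑ j', R i i' * R j j' * (χ k i' * R k j') := by
            refine Finset.sum_congr rfl fun i' _ => Finset.sum_congr rfl fun j' _ => ?_
            have : (∑ k', R i i' * R j j' * R k k' * a i' j' k')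
                = R i i' * R j j' * ∑ k', a i' j' k' * R k k' := by
              rw [Finset.mul_sum]
              exact Finset.sum_congr rfl fun k' _ => by ring
            rw [this, hR]
            simp only [Matrix.of_apply]
            rw [heigc k i' j']
        _ = ∑ i', R i i' * χ k i' * ∑ j', R j j' * R k j' := by
            refine Finset.sum_congr rfl fun i' _ => ?_
            rw [Finset.mul_sum]
            exact Finset.sum_congr rfl fun j' _ => by ring
        _ = 0 := by
            have : (∑ j', R j j' * R k j') = 0 := horth0
            simp [this]
    intro i j k hne
    by_cases hjk : j = k
    · subst hjk
      have hij : i ≠ j := fun h => hne ⟨h, rfl⟩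
      have hswap : (∑ i', ∑ j', ∑ k', R i i' * R j j' * R j k' * a i' j' k')
          = ∑ i', ∑ j', ∑ k', R j i' * R j j' * R i k' * a i' j' k' := by
        rw [sum3_swap13 (fun x y z => R i x * R j y * R j z * a x y z)]
        refine Finset.sum_congr rfl fun x _ => Finset.sum_congr rfl fun y _ =>
          Finset.sum_congr rfl fun z _ => ?_
        rw [hs13 z y x]
        ring
      rw [hswap]
      exact key j j i (Ne.symm hij)
    · exact key i j k hjk
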